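/- Set n_k = k^{2k}, v_k = n_{k+1} − n_k, v'_k = v_k (1 − a_{n_{k+1}}), and u_k = (4 log₂(v_k) / (n_{k+1} a_{n_{k+1}}))^{1/2}. Assume (a_n) are positive reals with n a_n nondecreasing to ∞, a_n nonincreasing to 0, a_n log₂ n → 0, and n a_n/(log₂ n)^{7/3} → ∞. Define K_k = inf{ P(Y_k = l) / P(Z_k = v_k) : l integer in [v'_k − v_k u_k a_{n_{k+1}}, v'_k + v_k u_k a_{n_{k+1}}] }, where Y_k has Poisson distribution with mean v'_k and Z_k has Poisson distribution with mean v_k. Then K_k → 1 as k → ∞. -/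

import Mathlib

open MeasureTheory ProbabilityTheory Filter

/-- `llog u = log (log (u ⊔ e))`. -/
noncomputable def llog (x : ℝ) : ℝ := Real.log (Real.log (max x (Real.exp 1)))

/-- Sup-norm over `[0,1]`. -/
noncomputable def supNorm (f : ℝ → ℝ) : ℝ := ⨆ t : Set.Icc (0:ℝ) 1, |f t|

/-- Membership in the Strassen set `S₁`. -/
def InStrassen1 (f : ℝ → ℝ) : Prop :=
  ∃ f' : ℝ → ℝ, Measurable f' ∧
    (∀ x ∈ Set.Icc (0:ℝ) 1, f x = ∫ t in (0:ℝ)..x, f' t) ∧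
    (∫ t in (0:ℝ)..1, (f' t) ^ 2) ≤ 1

/-- Membership in `S₂ = {f ∈ S₁ : f 1 = 0}`. -/
def InStrassen2 (f : ℝ → ℝ) : Prop := InStrassen1 f ∧ f 1 = 0

variable {Ω : Type*} [MeasurableSpace Ω]

/-- Empirical distribution function `F_n`. -/
noncomputable def empF (U : ℕ → Ω → ℝ) (n : ℕ) (t : ℝ) (ω : Ω) : ℝ :=
  (Set.ncard {i : ℕ | i < n ∧ U i ω ≤ t} : ℝ) / n

/-- Uniform empirical process `α_n(t) = √n (F_n(t) - t)`. -/
noncomputable def empProc (U : ℕ → Ω → ℝ) (n : ℕ) (t : ℝ) (ω : Ω) : ℝ :=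
  Real.sqrt n * (empF U n t ω - t)

/-- `H_n(t) = n (F_n(t) - t)`. -/
noncomputable def empH (U : ℕ → Ω → ℝ) (n : ℕ) (t : ℝ) (ω : Ω) : ℝ :=
  (n : ℝ) * (empF U n t ω - t)

/-- The generalized inverse `F_n⁻¹(t) = inf {u : F_n(u) ≥ t}`. -/
noncomputable def empQF (U : ℕ → Ω → ℝ) (n : ℕ) (t : ℝ) (ω : Ω) : ℝ :=
  sInf {u : ℝ | t ≤ empF U n u ω}

/-- Uniform quantile process `β_n(t) = √n (F_n⁻¹(t) - t)`. -/
noncomputable def quantProc (U : ℕ → Ω → ℝ) (n : ℕ) (t : ℝ) (ω : Ω) : ℝ :=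
  Real.sqrt n * (empQF U n t ω - t)

/-- `(U_i)` are i.i.d. uniform on `[0,1]`. -/
def IsUniformIID (μ : Measure Ω) (U : ℕ → Ω → ℝ) : Prop :=
  (∀ i, Measurable (U i)) ∧
  iIndepFun U μ ∧
  (∀ i, Measure.map (U i) μ = MeasureTheory.volume.restrict (Set.Icc (0:ℝ) 1))

/-- `n_k = k^{2k}`. -/
def nk (k : ℕ) : ℕ := k ^ (2 * k)

/-- `v_k = n_{k+1} - n_k`. -/
def vk (k : ℕ) : ℕ := nk (k + 1) - nk k

/-- The Poisson probability `P(X = l)` for a Poisson random variable with mean `m`. -/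
noncomputable def poissonProb (m : ℝ) (l : ℕ) : ℝ :=
  Real.exp (-m) * m ^ l / (Nat.factorial l)

/-- `u_k = (4 log₂ v_k / (n_{k+1} a_{n_{k+1}}))^{1/2}`. -/
noncomputable def uk (a : ℕ → ℝ) (k : ℕ) : ℝ :=
  Real.sqrt (4 * llog (vk k) / ((nk (k + 1) : ℝ) * a (nk (k + 1))))

namespace StrassenAux


lemma abs_log_one_add_sub {x : ℝ} (hx : |x| ≤ 1/2) : |Real.log (1+x) - x| ≤ 2*x^2 := by
  have h1 : |(-x)| < 1 := by rw [abs_neg]; linarith [abs_nonneg x]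
  have h := Real.abs_log_sub_add_sum_range_le h1 1
  simp only [Finset.sum_range_one, pow_one, Nat.cast_zero, zero_add, div_one, sub_neg_eq_add,
    abs_neg] at h
  have h2 : -x + Real.log (1 + x) = Real.log (1+x) - x := by ring
  rw [h2] at h
  have h3 : |x|^(1+1)/(1 - |x|) ≤ 2*x^2 := by
    have hx0 : (0:ℝ) ≤ |x| := abs_nonneg x
    have h4 : |x|^2 = x^2 := sq_abs x
    have h5 : (1:ℝ)/2 ≤ 1 - |x| := by linarith
    calc |x|^(1+1)/(1-|x|) ≤ |x|^2/(1/2) := by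
          apply div_le_div_of_nonneg_left (by positivity) (by norm_num) h5
      _ = 2*x^2 := by rw [h4]; ring
  exact h.trans h3

lemma key1 {m δ : ℝ} (hm : 0 < m) (hδ : |δ| ≤ m/2) :
    |δ - (m + δ) * Real.log (1 + δ/m)| ≤ 4*δ^2/m := by
  have hx : |δ/m| ≤ 1/2 := by
    rw [abs_div, abs_of_pos hm, div_le_iff₀ hm]; linarith
  have hr := abs_log_one_add_sub hx
  set r := Real.log (1 + δ/m) - δ/m with hrdef
  have hlog : Real.log (1 + δ/m) = δ/m + r := by rw [hrdef]; ring
  rw [hlog]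
  have hmne : m ≠ 0 := hm.ne'
  have heq : δ - (m+δ)*(δ/m + r) = -(δ*(δ/m)) - (m+δ)*r := by field_simp; ring
  rw [heq]
  have h1 : |(-(δ*(δ/m))) - (m+δ)*r| ≤ |δ*(δ/m)| + |(m+δ) * r| := by
    rw [sub_eq_add_neg]
    refine (abs_add_le _ _).trans ?_
    rw [abs_neg, abs_neg]
  refine h1.trans ?_
  rw [abs_mul, abs_mul, abs_div, abs_of_pos hm]
  have key : |δ| * |δ| = δ^2 := by rw [← sq_abs δ]; ring
  have h2 : |m + δ| ≤ 3/2*m := by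
    have := abs_le.mp hδ
    rw [abs_le]; constructor <;> linarith [this.1, this.2]
  have h6 : |m+δ| * |r| ≤ (3/2*m)*(2*(δ^2/m^2)) := by
    apply mul_le_mul h2 (hr.trans (le_of_eq (by rw [div_pow]))) (abs_nonneg r) (by positivity)
  have h7 : (3/2*m)*(2*(δ^2/m^2)) = 3*(δ^2/m) := by field_simp
  have h8 : |δ| * (|δ|/m) = δ^2/m := by rw [← mul_div_assoc, key]
  rw [h8]
  calc δ^2/m + |m+δ| * |r| ≤ δ^2/m + 3*(δ^2/m) := by rw [h7] at h6; linarith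
    _ = 4*δ^2/m := by ring

lemma key2 {y : ℝ} (hy : 1/2 ≤ y) : |Real.log y| ≤ 2*|y - 1| := by
  rcases le_or_gt 1 y with h | h
  · rw [abs_of_nonneg (Real.log_nonneg h), abs_of_nonneg (by linarith)]
    have := Real.log_le_sub_one_of_pos (by linarith : (0:ℝ) < y)
    linarith
  · have hy0 : (0:ℝ) < y := by linarith
    rw [abs_of_nonpos (Real.log_nonpos hy0.le h.le), abs_of_nonpos (by linarith)]
    have h2 : Real.log y⁻¹ ≤ y⁻¹ - 1 := Real.log_le_sub_one_of_pos (by positivity)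
    rw [Real.log_inv] at h2
    have h3 : y⁻¹ - 1 ≤ 2*(1-y) := by
      rw [inv_eq_one_div, div_sub' hy0.ne', div_le_iff₀ hy0]
      nlinarith
    linarith

lemma key3 {x : ℝ} (hx : |x| ≤ 1/2) : |Real.exp x - 1| ≤ 2*|x| := by
  have habs := abs_le.mp hx
  have hlb : 1 + x ≤ Real.exp x := by linarith [Real.add_one_le_exp x]
  rcases le_or_gt 0 x with h | h
  · have h2 : (0:ℝ) < 1 - x := by linarith
    have hub : Real.exp x ≤ (1 - x)⁻¹ := by
      have h1 : 1 - x ≤ Real.exp (-x) := by linarith [Real.add_one_le_exp (-x)]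
      have h3 : Real.exp x = (Real.exp (-x))⁻¹ := by rw [Real.exp_neg, inv_inv]
      rw [h3]
      exact inv_anti₀ h2 h1
    have h4 : (1-x)⁻¹ ≤ 1 + 2*x := by
      rw [inv_eq_one_div, div_le_iff₀ h2]
      nlinarith
    rw [abs_of_nonneg h, abs_of_nonneg (by linarith : (0:ℝ) ≤ Real.exp x - 1)]
    linarith
  · have hub : Real.exp x ≤ 1 := by
      calc Real.exp x ≤ Real.exp 0 := Real.exp_le_exp.mpr h.le
        _ = 1 := Real.exp_zero
    rw [abs_of_neg h, abs_of_nonpos (by linarith : Real.exp x - 1 ≤ 0)]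
    linarith



lemma log_pp {m : ℝ} (hm : 0 < m) (l : ℕ) :
    Real.log (poissonProb m l) = -m + l * Real.log m - Real.log (Nat.factorial l) := by
  unfold poissonProb
  rw [Real.log_div (by positivity) (by exact_mod_cast (Nat.factorial_pos l).ne'),
    Real.log_mul (Real.exp_ne_zero _) (by positivity), Real.log_exp, Real.log_pow]

lemma pp_pos {m : ℝ} (hm : 0 < m) (l : ℕ) : 0 < poissonProb m l := by
  unfold poissonProb; positivity

lemma log_ratio (z l : ℕ) (hz : 1 ≤ z) (hl : 1 ≤ l) (m : ℝ) (hm : 0 < m) :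
    Real.log (poissonProb m l / poissonProb (z : ℝ) z)
      = (((l:ℝ) - m) - (l:ℝ) * Real.log ((l:ℝ) / m)) + (1/2) * Real.log ((z:ℝ)/(l:ℝ))
        + (Real.log (Stirling.stirlingSeq z) - Real.log (Stirling.stirlingSeq l)) := by
  have hl0 : (0:ℝ) < l := by exact_mod_cast hl
  have hz0 : (0:ℝ) < z := by exact_mod_cast hz
  rw [Real.log_div (pp_pos hm l).ne' (pp_pos hz0 z).ne', log_pp hm l, log_pp hz0 z]
  have hfl := Stirling.log_stirlingSeq_formula l
  have hfz := Stirling.log_stirlingSeq_formula z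
  rw [Real.log_div hl0.ne' (Real.exp_ne_zero 1), Real.log_exp,
    Real.log_mul two_ne_zero hl0.ne'] at hfl
  rw [Real.log_div hz0.ne' (Real.exp_ne_zero 1), Real.log_exp,
    Real.log_mul two_ne_zero hz0.ne'] at hfz
  rw [Real.log_div hl0.ne' hm.ne', Real.log_div hz0.ne' hl0.ne']
  linear_combination hfl - hfz

lemma stirling_cauchy (ε : ℝ) (hε : 0 < ε) : ∃ N : ℕ, ∀ p ≥ N, ∀ q ≥ N,
    |Real.log (Stirling.stirlingSeq p) - Real.log (Stirling.stirlingSeq q)| ≤ ε := by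
  have hπ : (0:ℝ) < Real.sqrt Real.pi := Real.sqrt_pos.mpr Real.pi_pos
  have hg : Tendsto (fun n => Real.log (Stirling.stirlingSeq n)) atTop
      (nhds (Real.log (Real.sqrt Real.pi))) :=
    ((Real.continuousAt_log hπ.ne').tendsto).comp Stirling.tendsto_stirlingSeq_sqrt_pi
  rw [Metric.tendsto_atTop] at hg
  obtain ⟨N, hN⟩ := hg (ε/2) (by linarith)
  refine ⟨N, fun p hp q hq => ?_⟩
  have h1 := hN p hp
  have h2 := hN q hq
  rw [Real.dist_eq] at h1 h2
  calc |Real.log (Stirling.stirlingSeq p) - Real.log (Stirling.stirlingSeq q)|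
      ≤ |Real.log (Stirling.stirlingSeq p) - Real.log (Real.sqrt Real.pi)|
        + |Real.log (Real.sqrt Real.pi) - Real.log (Stirling.stirlingSeq q)| := abs_sub_le _ _ _
    _ ≤ ε := by rw [abs_sub_comm] at h2; linarith

lemma llog_nonneg (x : ℝ) : 0 ≤ llog x := by
  unfold llog
  apply Real.log_nonneg
  calc (1:ℝ) = Real.log (Real.exp 1) := (Real.log_exp 1).symm
    _ ≤ Real.log (max x (Real.exp 1)) := Real.log_le_log (Real.exp_pos 1) (le_max_right _ _)

lemma llog_mono : Monotone llog := by
  intro x y hxy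
  unfold llog
  have hp : 0 < max x (Real.exp 1) := lt_of_lt_of_le (Real.exp_pos 1) (le_max_right _ _)
  have h2 : Real.log (max x (Real.exp 1)) ≤ Real.log (max y (Real.exp 1)) :=
    Real.log_le_log hp (max_le_max hxy le_rfl)
  have h3 : 1 ≤ Real.log (max x (Real.exp 1)) := by
    calc (1:ℝ) = Real.log (Real.exp 1) := (Real.log_exp 1).symm
      _ ≤ _ := Real.log_le_log (Real.exp_pos 1) (le_max_right _ _)
  exact Real.log_le_log (by linarith) h2

lemma one_le_llog {x : ℝ} (hx : Real.exp (Real.exp 1) ≤ x) : 1 ≤ llog x := by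
  unfold llog
  have he1 : (1:ℝ) ≤ Real.exp 1 := by linarith [Real.add_one_le_exp (1:ℝ)]
  have h0 : Real.exp 1 ≤ x := le_trans (Real.exp_le_exp.mpr he1) hx
  rw [max_eq_left h0]
  have h1 : Real.exp 1 ≤ Real.log x := by
    rw [← Real.log_exp (Real.exp 1)]
    exact Real.log_le_log (Real.exp_pos _) hx
  calc (1:ℝ) = Real.log (Real.exp 1) := (Real.log_exp 1).symm
    _ ≤ Real.log (Real.log x) := Real.log_le_log (Real.exp_pos 1) h1

lemma nk_succ_pos (k : ℕ) : 0 < nk (k+1) := Nat.pow_pos (Nat.succ_pos k)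

lemma four_nk_le {k : ℕ} (hk : 1 ≤ k) : 4 * nk k ≤ nk (k+1) := by
  unfold nk
  have h1 : k ^ (2*k) * (k+1)^2 ≤ (k+1)^(2*k) * (k+1)^2 :=
    Nat.mul_le_mul_right _ (Nat.pow_le_pow_left (Nat.le_succ k) _)
  have h2 : (k+1)^(2*k) * (k+1)^2 = (k+1)^(2*(k+1)) := by
    rw [← pow_add]
    congr 1
  have h3 : 4 ≤ (k+1)^2 := by nlinarith
  calc 4 * k^(2*k) = k^(2*k) * 4 := by ring
    _ ≤ k^(2*k) * (k+1)^2 := Nat.mul_le_mul_left _ h3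
    _ ≤ (k+1)^(2*k) * (k+1)^2 := h1
    _ = (k+1)^(2*(k+1)) := h2

lemma nk_le_two_vk {k : ℕ} (hk : 1 ≤ k) : nk (k+1) ≤ 2 * vk k := by
  have h4 := four_nk_le hk
  have h5 : nk k ≤ nk (k+1) := by omega
  unfold vk
  omega

lemma vk_le (k : ℕ) : vk k ≤ nk (k+1) := Nat.sub_le _ _

lemma one_le_vk {k : ℕ} (hk : 1 ≤ k) : 1 ≤ vk k := by
  have := nk_le_two_vk hk
  have := nk_succ_pos k
  omega


set_option maxHeartbeats 1000000 in
lemma main_estimate (z nn N₁ : ℕ) (A U ε₀ : ℝ)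
    (hz1 : 1 ≤ z) (hN₁1 : 1 ≤ N₁)
    (hA : 0 < A) (hA14 : A ≤ 1/4) (hAe : A ≤ ε₀/6)
    (hU : 0 ≤ U) (hUA14 : U*A ≤ 1/4) (hUAe : U*A ≤ ε₀/6)
    (hε₀pos : 0 < ε₀) (hε₀half : ε₀ ≤ 1/2)
    (hS : (z:ℝ)*U^2*A^2 ≤ ε₀/24)
    (hN2Z : (nn:ℝ) ≤ 2*(z:ℝ)) (hN16 : 16*(N₁:ℝ) ≤ (nn:ℝ))
    (hcau : ∀ p ≥ N₁, ∀ q ≥ N₁,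
      |Real.log (Stirling.stirlingSeq p) - Real.log (Stirling.stirlingSeq q)| ≤ ε₀/3) :
    ∀ l : ℕ, (l:ℝ) ∈ Set.Icc ((z:ℝ)*(1-A) - (z:ℝ)*U*A) ((z:ℝ)*(1-A) + (z:ℝ)*U*A) →
      |poissonProb ((z:ℝ)*(1-A)) l / poissonProb (z:ℝ) z - 1| ≤ 2*ε₀ := by
  intro l hl
  obtain ⟨hlo, hhi⟩ := hl
  set Z : ℝ := (z:ℝ) with hZdef
  set M : ℝ := Z*(1-A) with hMdef
  set W : ℝ := Z*U*A with hWdef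
  have hZ1 : (1:ℝ) ≤ Z := by rw [hZdef]; exact_mod_cast hz1
  have hZpos : (0:ℝ) < Z := by linarith
  have hMpos : 0 < M := by rw [hMdef]; nlinarith
  have hM34 : 3/4*Z ≤ M := by rw [hMdef]; nlinarith
  have hWpos : 0 ≤ W := by
    rw [hWdef]; exact mul_nonneg (mul_nonneg hZpos.le hU) hA.le
  have hWM : W ≤ M/2 := by
    rw [hWdef, hMdef]
    nlinarith [mul_le_mul_of_nonneg_left hUA14 hZpos.le]
  have hlR : ((N₁:ℝ)) ≤ (l:ℝ) := by
    have h0 : (0:ℝ) ≤ (N₁:ℝ) := Nat.cast_nonneg _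
    linarith
  have hlN : N₁ ≤ l := by exact_mod_cast hlR
  have hl1 : 1 ≤ l := le_trans hN₁1 hlN
  have hzN : N₁ ≤ z := by
    have h : (N₁:ℝ) ≤ Z := by linarith
    rw [hZdef] at h
    exact_mod_cast h
  have hδW : |(l:ℝ) - M| ≤ W := abs_le.mpr ⟨by linarith, by linarith⟩
  have hδM : |(l:ℝ) - M| ≤ M/2 := hδW.trans hWM
  -- term 1
  have hT1 : |((l:ℝ) - M) - (l:ℝ) * Real.log ((l:ℝ)/M)| ≤ ε₀/3 := by
    have h := key1 hMpos hδM
    have hrw1 : (1:ℝ) + ((l:ℝ) - M)/M = (l:ℝ)/M := by field_simp; ring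
    have hrw2 : M + ((l:ℝ) - M) = (l:ℝ) := by ring
    rw [hrw1, hrw2] at h
    refine h.trans ?_
    rw [div_le_iff₀ hMpos]
    have hd2 : ((l:ℝ) - M)^2 ≤ W^2 := by
      calc ((l:ℝ) - M)^2 = |(l:ℝ) - M|^2 := (sq_abs _).symm
        _ ≤ W^2 := pow_le_pow_left₀ (abs_nonneg _) hδW 2
    have hWs : W^2 ≤ Z*(ε₀/24) := by
      have heq : W^2 = Z*(Z*U^2*A^2) := by rw [hWdef]; ring
      rw [heq]
      exact mul_le_mul_of_nonneg_left hS hZpos.le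
    nlinarith [mul_le_mul_of_nonneg_left hM34 (by positivity : (0:ℝ) ≤ ε₀/3),
      mul_nonneg hZpos.le hε₀pos.le]
  -- term 2
  have hlpos : (0:ℝ) < l := by exact_mod_cast hl1
  have hlow : 1 - (U*A + A) ≤ (l:ℝ)/Z := by
    rw [le_div_iff₀ hZpos]; nlinarith [hlo]
  have hhigh : (l:ℝ)/Z ≤ 1 + (U*A + A) := by
    rw [div_le_iff₀ hZpos]; nlinarith [hhi]
  have hhalf : (1:ℝ)/2 ≤ (l:ℝ)/Z := by linarith
  have h2 := key2 hhalf
  have habs : |(l:ℝ)/Z - 1| ≤ U*A + A := abs_le.mpr ⟨by linarith, by linarith⟩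
  have hT2 : |(1/2) * Real.log (Z/(l:ℝ))| ≤ ε₀/3 := by
    have hflip : Real.log (Z/(l:ℝ)) = - Real.log ((l:ℝ)/Z) := by
      rw [← Real.log_inv, inv_div]
    rw [hflip, abs_mul, abs_neg, abs_of_pos (by norm_num : (0:ℝ) < 1/2)]
    nlinarith [h2, habs, abs_nonneg (Real.log ((l:ℝ)/Z))]
  -- term 3
  have hT3 := hcau z hzN l hlN
  have heq := log_ratio z l hz1 hl1 M hMpos
  have hqpos : 0 < poissonProb M l / poissonProb Z z :=
    div_pos (pp_pos hMpos l) (pp_pos hZpos z)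
  have hlogq : |Real.log (poissonProb M l / poissonProb Z z)| ≤ ε₀ := by
    rw [heq]
    have t1 := abs_add_le (((l:ℝ) - M) - (l:ℝ)*Real.log ((l:ℝ)/M)) ((1/2)*Real.log (Z/(l:ℝ)))
    have t2 := abs_add_le ((((l:ℝ) - M) - (l:ℝ)*Real.log ((l:ℝ)/M)) + (1/2)*Real.log (Z/(l:ℝ)))
      (Real.log (Stirling.stirlingSeq z) - Real.log (Stirling.stirlingSeq l))
    linarith
  have h3 := key3 (hlogq.trans hε₀half)
  rw [Real.exp_log hqpos] at h3
  calc |poissonProb M l / poissonProb Z z - 1|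
      ≤ 2*|Real.log (poissonProb M l / poissonProb Z z)| := h3
    _ ≤ 2*ε₀ := by linarith


end StrassenAux

open StrassenAux in
set_option maxHeartbeats 1000000 in
theorem statement (a : ℕ → ℝ) (ha_pos : ∀ n, 0 < a n)
    (hna_mono : Monotone (fun n : ℕ => (n : ℝ) * a n))
    (hna_top : Tendsto (fun n : ℕ => (n : ℝ) * a n) atTop atTop)
    (ha_anti : Antitone a) (ha_lim : Tendsto a atTop (nhds 0))
    (halog : Tendsto (fun n : ℕ => a n * llog n) atTop (nhds 0))
    (h73 : Tendsto (fun n : ℕ => (n : ℝ) * a n / llog n ^ ((7:ℝ)/3)) atTop atTop) :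
    Tendsto (fun k : ℕ =>
      sInf {r : ℝ | ∃ l : ℕ,
        (l : ℝ) ∈ Set.Icc
          ((vk k : ℝ) * (1 - a (nk (k + 1))) - (vk k : ℝ) * uk a k * a (nk (k + 1)))
          ((vk k : ℝ) * (1 - a (nk (k + 1))) + (vk k : ℝ) * uk a k * a (nk (k + 1))) ∧
        r = poissonProb ((vk k : ℝ) * (1 - a (nk (k + 1)))) l /
              poissonProb (vk k) (vk k)}) atTop (nhds 1) := by
  -- basic positivity
  have hNpos : ∀ k : ℕ, (0:ℝ) < ((nk (k+1) : ℕ) : ℝ) := fun k => by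
    exact_mod_cast nk_succ_pos k
  have hApos : ∀ k : ℕ, 0 < a (nk (k+1)) := fun k => ha_pos _
  have hUnn : ∀ k : ℕ, 0 ≤ uk a k := fun k => Real.sqrt_nonneg _
  have hUsq : ∀ k : ℕ, (uk a k)^2
      = 4 * llog ((vk k : ℕ):ℝ) / (((nk (k+1) : ℕ):ℝ) * a (nk (k+1))) := by
    intro k
    simp only [uk]
    exact Real.sq_sqrt (div_nonneg (by nlinarith [llog_nonneg ((vk k : ℕ):ℝ)])
      (mul_pos (hNpos k) (hApos k)).le)
  -- composed limits
  have hk_le : ∀ k : ℕ, k ≤ nk (k+1) := fun k =>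
    le_trans (Nat.le_succ k) (Nat.le_self_pow (by omega) (k+1))
  have hn_t : Tendsto (fun k : ℕ => nk (k+1)) atTop atTop :=
    tendsto_atTop_mono hk_le tendsto_id
  have hN_t : Tendsto (fun k : ℕ => ((nk (k+1) : ℕ) : ℝ)) atTop atTop :=
    tendsto_natCast_atTop_atTop.comp hn_t
  have hA0 : Tendsto (fun k : ℕ => a (nk (k+1))) atTop (nhds 0) := ha_lim.comp hn_t
  have hNA : Tendsto (fun k : ℕ => ((nk (k+1) : ℕ):ℝ) * a (nk (k+1))) atTop atTop :=
    hna_top.comp hn_t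
  have hAL : Tendsto (fun k : ℕ => a (nk (k+1)) * llog ((nk (k+1) : ℕ):ℝ)) atTop (nhds 0) :=
    halog.comp hn_t
  have h73c : Tendsto (fun k : ℕ =>
      ((nk (k+1) : ℕ):ℝ) * a (nk (k+1)) / llog ((nk (k+1) : ℕ):ℝ) ^ ((7:ℝ)/3)) atTop atTop :=
    h73.comp hn_t
  have hZleN : ∀ k : ℕ, ((vk k : ℕ):ℝ) ≤ ((nk (k+1) : ℕ):ℝ) := fun k => by
    exact_mod_cast vk_le k
  have hNle2Z : ∀ᶠ k in atTop, ((nk (k+1) : ℕ):ℝ) ≤ 2*((vk k : ℕ):ℝ) := by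
    filter_upwards [eventually_ge_atTop 1] with k hk
    exact_mod_cast nk_le_two_vk hk
  have hZt : Tendsto (fun k : ℕ => ((vk k : ℕ):ℝ)) atTop atTop := by
    apply tendsto_atTop_mono' atTop ?_ (hN_t.atTop_div_const two_pos)
    filter_upwards [hNle2Z] with k hk
    linarith
  have hL1ev : ∀ᶠ k in atTop, 1 ≤ llog ((nk (k+1) : ℕ):ℝ) :=
    (hN_t.eventually_ge_atTop (Real.exp (Real.exp 1))).mono fun k h => one_le_llog h
  -- llog N / (N A) → 0
  have hLdiv : Tendsto (fun k : ℕ =>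
      llog ((nk (k+1) : ℕ):ℝ) / (((nk (k+1) : ℕ):ℝ) * a (nk (k+1)))) atTop (nhds 0) := by
    have hinv : Tendsto (fun k : ℕ =>
        llog ((nk (k+1) : ℕ):ℝ) ^ ((7:ℝ)/3) / (((nk (k+1) : ℕ):ℝ) * a (nk (k+1))))
        atTop (nhds 0) := by
      refine h73c.inv_tendsto_atTop.congr fun k => ?_
      simp [inv_div]
    apply squeeze_zero' ?_ ?_ hinv
    · filter_upwards with k
      exact div_nonneg (llog_nonneg _) (mul_pos (hNpos k) (hApos k)).le
    · filter_upwards [hL1ev] with k hk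
      apply (div_le_div_iff_of_pos_right (mul_pos (hNpos k) (hApos k))).mpr
      nth_rewrite 1 [← Real.rpow_one (llog ((nk (k+1) : ℕ):ℝ))]
      exact Real.rpow_le_rpow_of_exponent_le hk (by norm_num)
  -- U → 0
  have hUsq0 : Tendsto (fun k : ℕ =>
      4 * llog ((vk k : ℕ):ℝ) / (((nk (k+1) : ℕ):ℝ) * a (nk (k+1)))) atTop (nhds 0) := by
    have hlim : Tendsto (fun k : ℕ =>
        4 * (llog ((nk (k+1) : ℕ):ℝ) / (((nk (k+1) : ℕ):ℝ) * a (nk (k+1))))) atTop (nhds 0) := by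
      simpa using hLdiv.const_mul 4
    apply squeeze_zero' ?_ ?_ hlim
    · filter_upwards with k
      exact div_nonneg (mul_nonneg (by norm_num) (llog_nonneg _))
        (mul_pos (hNpos k) (hApos k)).le
    · filter_upwards with k
      rw [mul_div_assoc]
      have h1 : llog ((vk k : ℕ):ℝ) ≤ llog ((nk (k+1) : ℕ):ℝ) := llog_mono (hZleN k)
      have h2 : llog ((vk k : ℕ):ℝ) / (((nk (k+1) : ℕ):ℝ) * a (nk (k+1)))
          ≤ llog ((nk (k+1) : ℕ):ℝ) / (((nk (k+1) : ℕ):ℝ) * a (nk (k+1))) :=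
        (div_le_div_iff_of_pos_right (mul_pos (hNpos k) (hApos k))).mpr h1
      nlinarith [div_nonneg (llog_nonneg ((vk k : ℕ):ℝ)) (mul_pos (hNpos k) (hApos k)).le]
  have hU0 : Tendsto (fun k : ℕ => uk a k) atTop (nhds 0) := by
    have := hUsq0.sqrt
    rw [Real.sqrt_zero] at this
    exact this.congr fun k => by simp only [uk]
  have hUA0 : Tendsto (fun k : ℕ => uk a k * a (nk (k+1))) atTop (nhds 0) := by
    simpa using hU0.mul hA0
  -- s := Z U² A² → 0
  have hs : Tendsto (fun k : ℕ =>
      ((vk k : ℕ):ℝ) * (uk a k)^2 * (a (nk (k+1)))^2) atTop (nhds 0) := by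
    have hlim : Tendsto (fun k : ℕ =>
        4 * (a (nk (k+1)) * llog ((nk (k+1) : ℕ):ℝ))) atTop (nhds 0) := by
      simpa using hAL.const_mul 4
    apply squeeze_zero' ?_ ?_ hlim
    · filter_upwards with k
      have := hUnn k
      positivity
    · filter_upwards with k
      rw [hUsq k]
      have hNA0 : (0:ℝ) < ((nk (k+1) : ℕ):ℝ) * a (nk (k+1)) := mul_pos (hNpos k) (hApos k)
      have heq : ((vk k : ℕ):ℝ) * (4 * llog ((vk k : ℕ):ℝ) / (((nk (k+1) : ℕ):ℝ) * a (nk (k+1))))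
            * (a (nk (k+1)))^2
          = 4 * ((vk k : ℕ):ℝ) * llog ((vk k : ℕ):ℝ) * a (nk (k+1)) / ((nk (k+1) : ℕ):ℝ) := by
        field_simp [(hNpos k).ne', (hApos k).ne']
      rw [heq, div_le_iff₀ (hNpos k)]
      have h1 : llog ((vk k : ℕ):ℝ) ≤ llog ((nk (k+1) : ℕ):ℝ) := llog_mono (hZleN k)
      have h2 : ((vk k : ℕ):ℝ) * llog ((vk k : ℕ):ℝ)
          ≤ ((nk (k+1) : ℕ):ℝ) * llog ((nk (k+1) : ℕ):ℝ) :=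
        mul_le_mul (hZleN k) h1 (llog_nonneg _) (Nat.cast_nonneg _)
      nlinarith [(hApos k).le, llog_nonneg ((vk k : ℕ):ℝ), (Nat.cast_nonneg (vk k) : (0:ℝ) ≤ ((vk k : ℕ):ℝ))]
  -- W ≥ 1 eventually
  have hLZ1 : ∀ᶠ k in atTop, 1 ≤ llog ((vk k : ℕ):ℝ) :=
    (hZt.eventually_ge_atTop (Real.exp (Real.exp 1))).mono fun k h => one_le_llog h
  have hW1 : ∀ᶠ k in atTop, 1 ≤ ((vk k : ℕ):ℝ) * uk a k * a (nk (k+1)) := by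
    filter_upwards [hLZ1, hNA.eventually_ge_atTop 1, hNle2Z] with k hL hNA1 h2Z
    have hx0 : 0 ≤ ((vk k : ℕ):ℝ) * uk a k * a (nk (k+1)) :=
      mul_nonneg (mul_nonneg (Nat.cast_nonneg _) (hUnn k)) (hApos k).le
    have h1 : ((nk (k+1) : ℕ):ℝ) * a (nk (k+1))
        ≤ (((vk k : ℕ):ℝ) * uk a k * a (nk (k+1)))^2 := by
      have heq : (((vk k : ℕ):ℝ) * uk a k * a (nk (k+1)))^2
          = ((vk k : ℕ):ℝ)^2 * (uk a k)^2 * (a (nk (k+1)))^2 := by ring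
      rw [heq, hUsq k]
      have heq2 : ((vk k : ℕ):ℝ)^2
            * (4 * llog ((vk k : ℕ):ℝ) / (((nk (k+1) : ℕ):ℝ) * a (nk (k+1))))
            * (a (nk (k+1)))^2
          = 4 * ((vk k : ℕ):ℝ)^2 * llog ((vk k : ℕ):ℝ) * a (nk (k+1)) / ((nk (k+1) : ℕ):ℝ) := by
        field_simp [(hNpos k).ne', (hApos k).ne']
      rw [heq2, le_div_iff₀ (hNpos k)]
      have h4 : ((nk (k+1) : ℕ):ℝ)^2 ≤ 4*((vk k : ℕ):ℝ)^2 := by nlinarith [(Nat.cast_nonneg (vk k) : (0:ℝ) ≤ ((vk k : ℕ):ℝ))]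
      have h5 : 4*((vk k : ℕ):ℝ)^2 ≤ 4*((vk k : ℕ):ℝ)^2 * llog ((vk k : ℕ):ℝ) := by
        nlinarith [sq_nonneg ((vk k : ℕ):ℝ)]
      nlinarith [mul_le_mul_of_nonneg_right (h4.trans h5) (hApos k).le]
    nlinarith [hNA1, h1, hx0]
  -- final ε-argument
  rw [Metric.tendsto_nhds]
  intro ε hε
  set ε₀ : ℝ := min (ε/8) (1/2) with hε₀def
  have hε₀pos : 0 < ε₀ := lt_min (by linarith) one_half_pos
  have hε₀half : ε₀ ≤ 1/2 := min_le_right _ _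
  have hε₀ε : 2*ε₀ ≤ ε/4 := by
    have := min_le_left (ε/8) (1/2); linarith
  obtain ⟨N₀, hN₀⟩ := stirling_cauchy (ε₀/3) (by positivity)
  set N₁ := max N₀ 1 with hN₁def
  have hN₁1 : 1 ≤ N₁ := le_max_right _ _
  have hcau : ∀ p ≥ N₁, ∀ q ≥ N₁,
      |Real.log (Stirling.stirlingSeq p) - Real.log (Stirling.stirlingSeq q)| ≤ ε₀/3 :=
    fun p hp q hq => hN₀ p (le_trans (le_max_left _ _) hp) q (le_trans (le_max_left _ _) hq)
  have evA : ∀ᶠ k in atTop, a (nk (k+1)) < min (1/4) (ε₀/6) :=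
    hA0.eventually_lt_const (lt_min (by norm_num) (by positivity))
  have evUA : ∀ᶠ k in atTop, uk a k * a (nk (k+1)) < min (1/4) (ε₀/6) :=
    hUA0.eventually_lt_const (lt_min (by norm_num) (by positivity))
  have evS : ∀ᶠ k in atTop, ((vk k : ℕ):ℝ)*(uk a k)^2*(a (nk (k+1)))^2 < ε₀/24 :=
    hs.eventually_lt_const (by positivity)
  have evN16 : ∀ᶠ k in atTop, 16*((N₁ : ℕ):ℝ) ≤ ((nk (k+1) : ℕ):ℝ) :=
    hN_t.eventually_ge_atTop _
  filter_upwards [evA, evUA, evS, evN16, hNle2Z, hW1, eventually_ge_atTop 1]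
    with k hAk hUAk hSk hN16k h2Zk hW1k hk1
  have hz1 : 1 ≤ vk k := one_le_vk hk1
  have hmain := main_estimate (vk k) (nk (k+1)) N₁ (a (nk (k+1))) (uk a k) ε₀
    hz1 hN₁1 (hApos k) (le_of_lt (lt_of_lt_of_le hAk (min_le_left _ _)))
    (le_of_lt (lt_of_lt_of_le hAk (min_le_right _ _)))
    (hUnn k) (le_of_lt (lt_of_lt_of_le hUAk (min_le_left _ _)))
    (le_of_lt (lt_of_lt_of_le hUAk (min_le_right _ _)))
    hε₀pos hε₀half hSk.le h2Zk hN16k hcau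
  have hA14 : a (nk (k+1)) ≤ 1/4 := le_of_lt (lt_of_lt_of_le hAk (min_le_left _ _))
  set M : ℝ := ((vk k : ℕ):ℝ) * (1 - a (nk (k+1))) with hMdef
  set W : ℝ := ((vk k : ℕ):ℝ) * uk a k * a (nk (k+1)) with hWdef
  set S : Set ℝ := {r : ℝ | ∃ l : ℕ, (l:ℝ) ∈ Set.Icc (M - W) (M + W) ∧
    r = poissonProb M l / poissonProb ((vk k : ℕ):ℝ) (vk k)} with hSdef
  have hbound : ∀ r ∈ S, |r - 1| ≤ 2*ε₀ := by
    rintro r ⟨l, hlmem, rfl⟩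
    exact hmain l hlmem
  have hMnn : (0:ℝ) ≤ M := by
    rw [hMdef]
    nlinarith [(Nat.cast_nonneg (vk k) : (0:ℝ) ≤ ((vk k : ℕ):ℝ)), hA14]
  have hmem₀ : ((⌈M⌉₊ : ℕ):ℝ) ∈ Set.Icc (M - W) (M + W) := by
    constructor
    · have h1 := Nat.le_ceil M
      have hWnn : (0:ℝ) ≤ W := le_trans zero_le_one hW1k
      linarith
    · have h1 := (Nat.ceil_lt_add_one hMnn).le
      linarith [hW1k]
  have hr₀ : poissonProb M ⌈M⌉₊ / poissonProb ((vk k : ℕ):ℝ) (vk k) ∈ S := ⟨⌈M⌉₊, hmem₀, rfl⟩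
  have hne : S.Nonempty := ⟨_, hr₀⟩
  have hlb : ∀ r ∈ S, 1 - 2*ε₀ ≤ r := fun r hr => by
    have h := abs_le.mp (hbound r hr); linarith [h.1]
  have hbdd : BddBelow S := ⟨1 - 2*ε₀, fun r hr => hlb r hr⟩
  have hinf1 : 1 - 2*ε₀ ≤ sInf S := le_csInf hne hlb
  have hinf2 : sInf S ≤ 1 + 2*ε₀ := by
    refine (csInf_le hbdd hr₀).trans ?_
    have h := abs_le.mp (hbound _ hr₀); linarith [h.2]
  rw [Real.dist_eq]
  have habs : |sInf S - 1| ≤ 2*ε₀ := abs_le.mpr ⟨by linarith, by linarith⟩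
  linarith
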